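/- Let B, n, q ≥ 1, let X, Y ∈ Matrix (Fin n) (Fin B) ℝ, D ∈ Matrix (Fin n) (Fin q) ℝ, and α : Fin q → ℝ be fixed, let E₀ ∈ Matrix (Fin q) (Fin n) ℝ satisfy the nondegeneracy condition |(E₀·Y)_{k,b}| ≠ Real.exp(α k) for all k, b, and set Z_{k,b} = Real.sign((E₀·Y)_{k,b}) · max(|(E₀·Y)_{k,b}| − exp(α k), 0). Define the loss L(E) = (1/B) ∑_{r,b} ( X_{r,b} − ∑_k D_{r,k} · Real.sign((E·Y)_{k,b}) · max(|(E·Y)_{k,b}| − exp(α k), 0) )². Then L is differentiable at E₀ with Fréchet derivative H ↦ ∑_{k < q} ∑_{j < n} G_{k,j} H_{k,j}, where G_{k,j} = −(2/B) ∑_{b < B} ( Dᵀ·(X − D·Z) )_{k,b} · (if exp(α k) < |(E₀·Y)_{k,b}| then 1 else 0) · Y_{j,b}. That is, ∂L/∂E = −(2/B) [ Dᵀ(X − D T_{exp(α1ᵀ)}(E₀Y)) ⊙ 1_{|E₀Y| > exp(α1ᵀ)} ] Yᵀ. -/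

import Mathlib

open Matrix

lemma softThresh_hasDerivAt (c : ℝ) (hc : 0 < c) (t₀ : ℝ) (h : |t₀| ≠ c) :
    HasDerivAt (fun t : ℝ => Real.sign t * max (|t| - c) 0)
      (if c < |t₀| then 1 else 0) t₀ := by
  rcases lt_or_gt_of_ne h with hlt | hgt
  · rw [if_neg (not_lt.mpr hlt.le)]
    have hev : (fun t : ℝ => Real.sign t * max (|t| - c) 0) =ᶠ[nhds t₀] fun _ => 0 := by
      have : ∀ᶠ t in nhds t₀, |t| < c :=
        (continuous_abs.tendsto t₀).eventually_lt_const hlt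
      filter_upwards [this] with t ht
      rw [max_eq_right (by linarith), mul_zero]
    exact (hasDerivAt_const t₀ (0:ℝ)).congr_of_eventuallyEq hev
  · rw [if_pos hgt]
    rcases lt_or_gt_of_ne (fun ht : t₀ = 0 => by simp [ht] at hgt; linarith) with hneg | hpos
    · have hev : (fun t : ℝ => Real.sign t * max (|t| - c) 0) =ᶠ[nhds t₀] fun t => t + c := by
        have : ∀ᶠ t in nhds t₀, t < -c := by
          have : t₀ < -c := by
            rcases abs_cases t₀ with ⟨h1, h2⟩ | ⟨h1, h2⟩ <;> linarith
          exact (continuous_id.tendsto t₀).eventually_lt_const this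
        filter_upwards [this] with t ht
        have ht0 : t < 0 := by linarith
        rw [Real.sign_of_neg ht0, abs_of_neg ht0, max_eq_left (by linarith)]
        ring
      exact ((hasDerivAt_id t₀).add_const c).congr_of_eventuallyEq hev
    · have hev : (fun t : ℝ => Real.sign t * max (|t| - c) 0) =ᶠ[nhds t₀] fun t => t - c := by
        have : ∀ᶠ t in nhds t₀, c < t := by
          have : c < t₀ := by
            rcases abs_cases t₀ with ⟨h1, h2⟩ | ⟨h1, h2⟩ <;> linarith
          exact (continuous_id.tendsto t₀).eventually_const_lt this
        filter_upwards [this] with t ht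
        have ht0 : 0 < t := by linarith
        rw [Real.sign_of_pos ht0, abs_of_pos ht0, max_eq_left (by linarith)]
        ring
      exact ((hasDerivAt_id t₀).sub_const c).congr_of_eventuallyEq hev


/-- Derivative of the mini-batch training loss with respect to the encoding
filter matrix `E`: under the nondegeneracy condition `|E₀Y| ≠ exp(α)`, the loss
is differentiable at `E₀` with gradient
`−(2/B)[Dᵀ(X − D T_{exp(α1ᵀ)}(E₀Y)) ⊙ 1_{|E₀Y| > exp(α1ᵀ)}]Yᵀ`. -/
theorem hasFDerivAt_loss_wrt_E (B n q : ℕ) (hB : 1 ≤ B) (hn : 1 ≤ n) (hq : 1 ≤ q)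
    (X Y : Matrix (Fin n) (Fin B) ℝ)
    (D : Matrix (Fin n) (Fin q) ℝ) (α : Fin q → ℝ)
    (E₀ : Fin q → Fin n → ℝ)
    (hnd : ∀ (k : Fin q) (b : Fin B),
      |∑ j : Fin n, E₀ k j * Y j b| ≠ Real.exp (α k))
    (Z : Matrix (Fin q) (Fin B) ℝ)
    (hZ : ∀ (k : Fin q) (b : Fin B),
      Z k b = Real.sign (∑ j : Fin n, E₀ k j * Y j b)
        * max (|∑ j : Fin n, E₀ k j * Y j b| - Real.exp (α k)) 0) :
    ∃ f : (Fin q → Fin n → ℝ) →L[ℝ] ℝ,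
      (∀ H : Fin q → Fin n → ℝ,
        f H = ∑ k : Fin q, ∑ j : Fin n,
          (-(2 / (B : ℝ)) * ∑ b : Fin B,
            (Dᵀ * (X - D * Z)) k b
              * (if Real.exp (α k) < |∑ j' : Fin n, E₀ k j' * Y j' b| then 1 else 0)
              * Y j b) * H k j) ∧
      HasFDerivAt
        (fun E : Fin q → Fin n → ℝ =>
          (1 / (B : ℝ)) * ∑ r : Fin n, ∑ b : Fin B,
            (X r b - ∑ k : Fin q,
              D r k * (Real.sign (∑ j : Fin n, E k j * Y j b)
                * max (|∑ j : Fin n, E k j * Y j b| - Real.exp (α k)) 0)) ^ 2)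
        f E₀ := by
  classical
  -- coordinate projection
  set P : Fin q → Fin n → (Fin q → Fin n → ℝ) →L[ℝ] ℝ := fun k j =>
    (ContinuousLinearMap.proj j).comp (ContinuousLinearMap.proj (R := ℝ)
      (φ := fun _ : Fin q => Fin n → ℝ) k) with hP
  set d : Fin q → Fin B → ℝ := fun k b =>
    if Real.exp (α k) < |∑ j : Fin n, E₀ k j * Y j b| then 1 else 0 with hd
  -- derivative of E ↦ ∑ j, E k j * Y j b
  have hu : ∀ (k : Fin q) (b : Fin B),
      HasFDerivAt (fun E : Fin q → Fin n → ℝ => ∑ j, E k j * Y j b)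
        (∑ j, Y j b • P k j) E₀ := by
    intro k b
    exact HasFDerivAt.fun_sum fun j _ => ((P k j).hasFDerivAt (x := E₀)).mul_const (Y j b)
  -- derivative of the soft-thresholded entry
  have hs : ∀ (k : Fin q) (b : Fin B),
      HasFDerivAt (fun E : Fin q → Fin n → ℝ =>
          Real.sign (∑ j, E k j * Y j b)
            * max (|∑ j, E k j * Y j b| - Real.exp (α k)) 0)
        (d k b • ∑ j, Y j b • P k j) E₀ := by
    intro k b
    exact (softThresh_hasDerivAt (Real.exp (α k)) (Real.exp_pos _)
      (∑ j, E₀ k j * Y j b) (hnd k b)).comp_hasFDerivAt E₀ (hu k b)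
  -- residual
  have hres : ∀ (r : Fin n) (b : Fin B),
      HasFDerivAt (fun E : Fin q → Fin n → ℝ =>
          X r b - ∑ k, D r k * (Real.sign (∑ j, E k j * Y j b)
            * max (|∑ j, E k j * Y j b| - Real.exp (α k)) 0))
        (-(∑ k, D r k • (d k b • ∑ j, Y j b • P k j))) E₀ := by
    intro r b
    exact (HasFDerivAt.fun_sum fun k _ => (hs k b).const_mul (D r k)).const_sub (X r b)
  -- value of residual at E₀
  set v : Fin n → Fin B → ℝ := fun r b => X r b - ∑ k, D r k * Z k b with hv
  have hval : ∀ (r : Fin n) (b : Fin B),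
      (X r b - ∑ k, D r k * (Real.sign (∑ j, E₀ k j * Y j b)
        * max (|∑ j, E₀ k j * Y j b| - Real.exp (α k)) 0)) = v r b := by
    intro r b
    simp only [hv]
    congr 1
    exact Finset.sum_congr rfl fun k _ => by rw [hZ k b]
  -- squared residual
  have hsq : ∀ (r : Fin n) (b : Fin B),
      HasFDerivAt (fun E : Fin q → Fin n → ℝ =>
          (X r b - ∑ k, D r k * (Real.sign (∑ j, E k j * Y j b)
            * max (|∑ j, E k j * Y j b| - Real.exp (α k)) 0)) ^ 2)
        ((2 * v r b) • -(∑ k, D r k • (d k b • ∑ j, Y j b • P k j))) E₀ := by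
    intro r b
    have h1 := (hres r b).fun_mul (hres r b)
    rw [hval r b] at h1
    have h2 : (v r b) • (-(∑ k, D r k • (d k b • ∑ j, Y j b • P k j)))
        + (v r b) • (-(∑ k, D r k • (d k b • ∑ j, Y j b • P k j)))
        = (2 * v r b) • -(∑ k, D r k • (d k b • ∑ j, Y j b • P k j)) := by
      rw [← add_smul, show v r b + v r b = 2 * v r b from by ring]
    rw [h2] at h1
    simpa only [← pow_two] using h1
  -- full loss
  have hF : HasFDerivAt
      (fun E : Fin q → Fin n → ℝ =>
        (1 / (B : ℝ)) * ∑ r : Fin n, ∑ b : Fin B,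
          (X r b - ∑ k : Fin q,
            D r k * (Real.sign (∑ j : Fin n, E k j * Y j b)
              * max (|∑ j : Fin n, E k j * Y j b| - Real.exp (α k)) 0)) ^ 2)
      ((1 / (B : ℝ)) • ∑ r : Fin n, ∑ b : Fin B,
        (2 * v r b) • -(∑ k, D r k • (d k b • ∑ j, Y j b • P k j))) E₀ :=
    (HasFDerivAt.fun_sum fun r _ => HasFDerivAt.fun_sum fun b _ => hsq r b).const_mul (1 / (B : ℝ))
  refine ⟨_, ?_, hF⟩
  intro H
  -- unfold the applied derivative
  simp only [ContinuousLinearMap.smul_apply, ContinuousLinearMap.sum_apply,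
    ContinuousLinearMap.neg_apply, ContinuousLinearMap.coe_comp', Function.comp_apply,
    ContinuousLinearMap.proj_apply, hP, smul_eq_mul]
  -- goal is now an equality of big sums; reorganize
  have hDT : ∀ (k : Fin q) (b : Fin B),
      (Dᵀ * (X - D * Z)) k b = ∑ r, D r k * v r b := by
    intro k b
    simp [Matrix.mul_apply, Matrix.transpose_apply, Matrix.sub_apply, hv]
  have hgoal : ∑ k : Fin q, ∑ j : Fin n,
      (-(2 / (B : ℝ)) * ∑ b : Fin B,
        (Dᵀ * (X - D * Z)) k b
          * (if Real.exp (α k) < |∑ j' : Fin n, E₀ k j' * Y j' b| then 1 else 0)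
          * Y j b) * H k j
      = ∑ k, ∑ j, (-(2 / (B : ℝ)) * ∑ b, (∑ r, D r k * v r b) * d k b * Y j b) * H k j := by
    simp only [hDT, hd]
  rw [hgoal]
  have reorder : ∀ (F : Fin n → Fin B → Fin q → Fin n → ℝ),
      ∑ r, ∑ b, ∑ k, ∑ j, F r b k j = ∑ k, ∑ j, ∑ b, ∑ r, F r b k j := by
    intro F
    calc ∑ r, ∑ b, ∑ k, ∑ j, F r b k j
        = ∑ r, ∑ k, ∑ b, ∑ j, F r b k j :=
          Finset.sum_congr rfl fun r _ => Finset.sum_comm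
      _ = ∑ k, ∑ r, ∑ b, ∑ j, F r b k j := Finset.sum_comm
      _ = ∑ k, ∑ r, ∑ j, ∑ b, F r b k j :=
          Finset.sum_congr rfl fun k _ => Finset.sum_congr rfl fun r _ => Finset.sum_comm
      _ = ∑ k, ∑ j, ∑ r, ∑ b, F r b k j :=
          Finset.sum_congr rfl fun k _ => Finset.sum_comm
      _ = ∑ k, ∑ j, ∑ b, ∑ r, F r b k j :=
          Finset.sum_congr rfl fun k _ => Finset.sum_congr rfl fun j _ => Finset.sum_comm
  calc (1 / (B : ℝ)) * ∑ r, ∑ b,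
        (2 * v r b) * -(∑ k, D r k * (d k b * ∑ j, Y j b * H k j))
      = ∑ r, ∑ b, ∑ k, ∑ j,
          (-(2 / (B : ℝ)) * (D r k * v r b) * d k b * Y j b) * H k j := by
        rw [Finset.mul_sum]
        refine Finset.sum_congr rfl fun r _ => ?_
        rw [Finset.mul_sum]
        refine Finset.sum_congr rfl fun b _ => ?_
        calc (1 / (B : ℝ)) * ((2 * v r b) * -(∑ k, D r k * (d k b * ∑ j, Y j b * H k j)))
            = ∑ k, (-(2 / (B : ℝ)) * v r b) * (D r k * (d k b * ∑ j, Y j b * H k j)) := by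
              rw [← Finset.mul_sum]; ring
          _ = ∑ k, ∑ j, (-(2 / (B : ℝ)) * (D r k * v r b) * d k b * Y j b) * H k j := by
              refine Finset.sum_congr rfl fun k _ => ?_
              calc (-(2 / (B : ℝ)) * v r b) * (D r k * (d k b * ∑ j, Y j b * H k j))
                  = (-(2 / (B : ℝ)) * v r b * D r k * d k b) * ∑ j, Y j b * H k j := by ring
                _ = ∑ j, (-(2 / (B : ℝ)) * (D r k * v r b) * d k b * Y j b) * H k j := by
                    rw [Finset.mul_sum]
                    exact Finset.sum_congr rfl fun j _ => by ring
    _ = ∑ k, ∑ j, ∑ b, ∑ r,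
          (-(2 / (B : ℝ)) * (D r k * v r b) * d k b * Y j b) * H k j := reorder _
    _ = ∑ k, ∑ j, (-(2 / (B : ℝ)) * ∑ b, (∑ r, D r k * v r b) * d k b * Y j b) * H k j := by
        refine Finset.sum_congr rfl fun k _ => Finset.sum_congr rfl fun j _ => ?_
        calc ∑ b, ∑ r, (-(2 / (B : ℝ)) * (D r k * v r b) * d k b * Y j b) * H k j
            = ∑ b, (-(2 / (B : ℝ)) * ((∑ r, D r k * v r b) * d k b * Y j b)) * H k j := by
              refine Finset.sum_congr rfl fun b _ => ?_
              calc ∑ r, (-(2 / (B : ℝ)) * (D r k * v r b) * d k b * Y j b) * H k j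
                  = (-(2 / (B : ℝ)) * d k b * Y j b * H k j) * ∑ r, D r k * v r b := by
                    rw [Finset.mul_sum]
                    exact Finset.sum_congr rfl fun r _ => by ring
                _ = (-(2 / (B : ℝ)) * ((∑ r, D r k * v r b) * d k b * Y j b)) * H k j := by
                    ring
          _ = (-(2 / (B : ℝ)) * ∑ b, (∑ r, D r k * v r b) * d k b * Y j b) * H k j := by
              rw [← Finset.sum_mul, ← Finset.mul_sum]
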